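/- Suppose F : Y → Y has inverse branches ℋ with contraction |h'| ≤ ρ₀^{−1}, roof function φ ≥ 1, eigenvalues λ_σ of the twisted transfer operator with λ_σ continuous in σ and λ₀ = 1, and suppose there exist ε₀ > 0 and C₃ < ∞ with sup_x Σ_{h: x ∈ dom(h)} |h'(x)| e^{ε₀ φ(h(x))} ≤ C₃. Then there exists ε ∈ (0,1) such that for all |σ| < ε and all n ≥ 1, λ_σ^{−n} sup_{h ∈ ℋₙ} sup_{x ∈ dom(h)} |h'(x)| e^{σ φₙ(h(x))} ≤ ρ^{−3n}, where ρ = ρ₀^{1/4}. -/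

import Mathlib

/-- Intermediate points of an inverse-branch word: `orbitPts h w x 0 = x`,
`orbitPts h w x (j+1) = h (w j) (orbitPts h w x j)`. An element of `ℋₙ` is the
composition `h (w (n−1)) ∘ ⋯ ∘ h (w 0)`, and these are the points at which
its derivative factors and Birkhoff sums are evaluated. -/
def orbitPts {ι : Type*} (h : ι → ℝ → ℝ) (w : ℕ → ι) (x : ℝ) : ℕ → ℝ
  | 0 => x
  | j + 1 => h (w j) (orbitPts h w x j)

lemma step_bound (ρ₀ ε₀ C₃ σ c a φy : ℝ) (hρ : 1 < ρ₀) (hε₀ : 0 < ε₀) (hC₃ : 0 < C₃)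
    (ha0 : 0 ≤ a) (ha : a ≤ ρ₀⁻¹) (hφy : 1 ≤ φy)
    (hK : a * Real.exp (ε₀ * φy) ≤ C₃) (hσε : σ ≤ ε₀)
    (h1 : (ρ₀⁻¹) ^ (1 - σ / ε₀) * C₃ ^ (σ / ε₀) ≤ c) (h2 : ρ₀⁻¹ ≤ c) :
    a * Real.exp (σ * φy) ≤ c := by
  have hρ0 : (0:ℝ) < ρ₀⁻¹ := by positivity
  rcases le_or_gt σ 0 with hσ | hσ
  · have : Real.exp (σ * φy) ≤ 1 := by
      rw [Real.exp_le_one_iff]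
      exact mul_nonpos_of_nonpos_of_nonneg hσ (le_trans zero_le_one hφy)
    calc a * Real.exp (σ * φy) ≤ a * 1 := by
          exact mul_le_mul_of_nonneg_left this ha0
      _ = a := mul_one a
      _ ≤ ρ₀⁻¹ := ha
      _ ≤ c := h2
  · set t : ℝ := σ / ε₀ with ht
    have ht0 : 0 ≤ t := le_of_lt (div_pos hσ hε₀)
    have ht1 : t ≤ 1 := by
      rw [ht, div_le_one hε₀]; exact hσε
    rcases eq_or_lt_of_le ha0 with ha0' | ha0'
    · rw [← ha0', zero_mul]
      exact le_trans (le_of_lt hρ0) h2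
    · have key : a * Real.exp (σ * φy) = a ^ (1 - t) * (a * Real.exp (ε₀ * φy)) ^ t := by
        rw [Real.mul_rpow ha0 (Real.exp_nonneg _), ← Real.exp_mul,
          ← mul_assoc, ← Real.rpow_add ha0', sub_add_cancel, Real.rpow_one]
        congr 1
        rw [ht]; congr 1; field_simp
      rw [key]
      refine le_trans ?_ h1
      have b1 : a ^ (1 - t) ≤ (ρ₀⁻¹) ^ (1 - t) :=
        Real.rpow_le_rpow ha0 ha (by linarith)
      have b2 : (a * Real.exp (ε₀ * φy)) ^ t ≤ C₃ ^ t :=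
        Real.rpow_le_rpow (by positivity) hK ht0
      exact mul_le_mul b1 b2 (Real.rpow_nonneg (by positivity) _) (Real.rpow_nonneg (le_of_lt hρ0) _)

/-- If the branches contract by `ρ₀⁻¹`, the roof `φ ≥ 1` has an exponential tail
(`Σ_h |h'| e^{ε₀φ∘h} ≤ C₃`), and `λ_σ` is continuous with `λ₀ = 1`, then there is
`ε ∈ (0,1)` such that for all `|σ| < ε` and `n ≥ 1`,
`λ_σ^{−n} sup_{h∈ℋₙ} sup_{x∈dom h} |h'(x)| e^{σφₙ(h(x))} ≤ ρ^{−3n}` where `ρ = ρ₀^{1/4}`. -/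
theorem stmt10 {ι : Type*} (h h' : ι → ℝ → ℝ) (dom : ι → Set ℝ)
    (φ lam : ℝ → ℝ) (ρ₀ ε₀ C₃ : ℝ)
    (hρ : 1 < ρ₀) (hε₀ : 0 < ε₀) (hC₃ : 0 < C₃)
    (hφ : ∀ x, 1 ≤ φ x)
    (hder : ∀ i x, 0 ≤ h' i x ∧ h' i x ≤ ρ₀⁻¹)
    (hlamcont : Continuous lam) (hlam0 : lam 0 = 1) (hlampos : ∀ σ, 0 < lam σ)
    (hsummable : ∀ x : ℝ,
      Summable fun i => Set.indicator (dom i) (fun y => h' i y * Real.exp (ε₀ * φ (h i y))) x)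
    (hsum : ∀ x : ℝ,
      (∑' i, Set.indicator (dom i) (fun y => h' i y * Real.exp (ε₀ * φ (h i y))) x) ≤ C₃) :
    ∃ ε ∈ Set.Ioo (0 : ℝ) 1, ∀ σ : ℝ, |σ| < ε → ∀ n : ℕ, 1 ≤ n → ∀ w : ℕ → ι, ∀ x : ℝ,
      (∀ j < n, orbitPts h w x j ∈ dom (w j)) →
      (∏ j ∈ Finset.range n, h' (w j) (orbitPts h w x j)) *
          Real.exp (σ * ∑ j ∈ Finset.range n, φ (orbitPts h w x (j + 1)))
        ≤ lam σ ^ n * ((ρ₀ ^ ((1 : ℝ) / 4)) ^ (3 * n))⁻¹ := by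
  have hρ0 : (0:ℝ) < ρ₀ := lt_trans one_pos hρ
  set c : ℝ → ℝ := fun σ => lam σ * ρ₀ ^ (-(3:ℝ)/4) with hc
  have hcpos : ∀ σ, 0 < c σ := fun σ => mul_pos (hlampos σ) (Real.rpow_pos_of_pos hρ0 _)
  have hccont : Continuous c := hlamcont.mul continuous_const
  set f1 : ℝ → ℝ := fun σ => (ρ₀⁻¹) ^ (1 - σ / ε₀) * C₃ ^ (σ / ε₀) with hf1def
  have hf1cont : Continuous f1 := by
    apply Continuous.mul
    · exact continuous_const.rpow (by continuity) (fun x => Or.inl (by positivity))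
    · exact continuous_const.rpow (by continuity) (fun x => Or.inl (ne_of_gt hC₃))
  have hbase : ρ₀⁻¹ < c 0 := by
    rw [hc]
    simp only [hlam0, one_mul]
    rw [← Real.rpow_neg_one ρ₀]
    exact Real.rpow_lt_rpow_left_iff hρ |>.mpr (by norm_num)
  have hf10 : f1 0 = ρ₀⁻¹ := by
    simp [hf1def]
  have ev1 : ∀ᶠ σ in nhds (0:ℝ), f1 σ < c σ :=
    hf1cont.continuousAt.eventually_lt hccont.continuousAt (by rw [hf10]; exact hbase)
  have ev2 : ∀ᶠ σ in nhds (0:ℝ), ρ₀⁻¹ < c σ :=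
    continuousAt_const.eventually_lt hccont.continuousAt hbase
  have ev3 : ∀ᶠ σ in nhds (0:ℝ), |σ| < ε₀ := by
    have := eventually_abs_sub_lt (0:ℝ) hε₀
    simpa using this
  obtain ⟨δ, hδpos, hδ⟩ := Metric.eventually_nhds_iff.mp ((ev1.and ev2).and ev3)
  refine ⟨min δ 1 / 2, ⟨by positivity, by
    have : min δ 1 ≤ 1 := min_le_right _ _
    linarith⟩, ?_⟩
  intro σ hσ n hn w x hdom
  have hσδ : dist σ 0 < δ := by
    rw [Real.dist_0_eq_abs]
    have h1 : min δ 1 / 2 ≤ δ := by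
      have := min_le_left δ 1
      linarith
    linarith
  obtain ⟨⟨hP1, hP2⟩, hP3⟩ := hδ hσδ
  have hσε : σ ≤ ε₀ := le_trans (le_abs_self σ) (le_of_lt hP3)
  -- per-step bound
  have step : ∀ j < n, h' (w j) (orbitPts h w x j) *
      Real.exp (σ * φ (orbitPts h w x (j + 1))) ≤ c σ := by
    intro j hj
    set xj := orbitPts h w x j
    have hmem : xj ∈ dom (w j) := hdom j hj
    have hK : h' (w j) xj * Real.exp (ε₀ * φ (h (w j) xj)) ≤ C₃ := by
      have hle := Summable.le_tsum (hsummable xj) (w j) (fun i _ =>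
        Set.indicator_nonneg (fun y _ => mul_nonneg (hder i y).1 (Real.exp_nonneg _)) _)
      rw [Set.indicator_of_mem hmem] at hle
      exact le_trans hle (hsum xj)
    have hx1 : orbitPts h w x (j + 1) = h (w j) xj := rfl
    rw [hx1]
    exact step_bound ρ₀ ε₀ C₃ σ (c σ) _ _ hρ hε₀ hC₃ (hder _ _).1 (hder _ _).2 (hφ _)
      hK hσε (le_of_lt hP1) (le_of_lt hP2)
  -- combine
  have lhs_eq : (∏ j ∈ Finset.range n, h' (w j) (orbitPts h w x j)) *
      Real.exp (σ * ∑ j ∈ Finset.range n, φ (orbitPts h w x (j + 1)))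
      = ∏ j ∈ Finset.range n,
        (h' (w j) (orbitPts h w x j) * Real.exp (σ * φ (orbitPts h w x (j + 1)))) := by
    rw [Finset.mul_sum, Real.exp_sum, ← Finset.prod_mul_distrib]
  rw [lhs_eq]
  have hprod : ∏ j ∈ Finset.range n,
      (h' (w j) (orbitPts h w x j) * Real.exp (σ * φ (orbitPts h w x (j + 1))))
      ≤ (c σ) ^ n := by
    calc _ ≤ ∏ j ∈ Finset.range n, c σ := by
          apply Finset.prod_le_prod
          · intro j _; exact mul_nonneg (hder _ _).1 (Real.exp_nonneg _)
          · intro j hj; exact step j (Finset.mem_range.mp hj)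
      _ = (c σ) ^ n := by rw [Finset.prod_const, Finset.card_range]
  refine le_trans hprod ?_
  have hrhs : (c σ) ^ n = lam σ ^ n * ((ρ₀ ^ ((1 : ℝ) / 4)) ^ (3 * n))⁻¹ := by
    rw [hc, mul_pow]
    congr 1
    rw [← Real.rpow_natCast (ρ₀ ^ ((1:ℝ)/4)) (3*n), ← Real.rpow_natCast (ρ₀ ^ (-(3:ℝ)/4)) n,
      ← Real.rpow_mul hρ0.le, ← Real.rpow_mul hρ0.le, ← Real.rpow_neg hρ0.le]
    congr 1
    push_cast
    ring
  rw [hrhs]
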